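/- Bounded variance at one fixed point implies the same variance bound at every fixed point: if E[‖(T_ξ − T)p‖²] ≤ σ*² for some p ∈ Fix(T), then E[‖(T_ξ − T)p'‖²] ≤ σ*² for every p' ∈ Fix(T). -/

import Mathlib

open MeasureTheory Filter Topology
open scoped RealInnerProductSpace ENNReal BigOperators

/-- Bounded variance at one fixed point implies the same variance
bound at every fixed point. -/
theorem stmt1_bounded_variance_all_fixed_points
    {H : Type*} [NormedAddCommGroup H] [InnerProductSpace ℝ H] [CompleteSpace H]
    {Ω : Type*} [MeasurableSpace Ω] (μ : Measure Ω) [IsProbabilityMeasure μ]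
    (Tξ : Ω → H → H) (T : H → H) (σstar : ℝ)
    (hne : ∀ᵐ ω ∂μ, ∀ x y : H, ‖Tξ ω x - Tξ ω y‖ ≤ ‖x - y‖)
    (hmeas : ∀ x : H, AEStronglyMeasurable (fun ω => Tξ ω x) μ)
    (hint : ∀ x : H, Integrable (fun ω => Tξ ω x) μ)
    (hT : ∀ x : H, T x = ∫ ω, Tξ ω x ∂μ)
    (p : H) (hp : T p = p)
    (hvar : ∫⁻ ω, ‖Tξ ω p - T p‖₊ ^ 2 ∂μ ≤ ENNReal.ofReal (σstar ^ 2)) :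
    ∀ p' : H, T p' = p' →
      ∫⁻ ω, ‖Tξ ω p' - T p'‖₊ ^ 2 ∂μ ≤ ENNReal.ofReal (σstar ^ 2) := by
  intro p' hp'
  set c : H := p' - p with hc
  set f : Ω → H := fun ω => Tξ ω p' - Tξ ω p - c with hf
  have hfint : Integrable f μ := ((hint p').sub (hint p)).sub (integrable_const c)
  have hEf : ∫ ω, f ω ∂μ = 0 := by
    have hA : Integrable (fun ω => Tξ ω p' - Tξ ω p) μ := (hint p').sub (hint p)
    have h1 : ∫ ω, f ω ∂μ = (∫ ω, Tξ ω p' ∂μ) - (∫ ω, Tξ ω p ∂μ) - c := by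
      rw [integral_sub hA (integrable_const c),
        integral_sub (hint p') (hint p), integral_const, probReal_univ,
        one_smul]
    rw [h1, ← hT, ← hT, hp, hp', hc]
    abel
  have hae : ∀ᵐ ω ∂μ, ‖f ω‖ ^ 2 ≤ 2 * ⟪c, -f ω⟫ := by
    filter_upwards [hne] with ω h
    have h1 : ‖f ω + c‖ ≤ ‖c‖ := by
      have := h p' p
      simpa [hf, hc, sub_add_cancel] using this
    have h2 : ‖f ω + c‖ ^ 2 ≤ ‖c‖ ^ 2 := by
      have := sq_le_sq' (by linarith [norm_nonneg (f ω + c), neg_nonpos_of_nonneg (norm_nonneg c)]) h1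
      simpa [sq] using this
    have h3 : ‖f ω + c‖ ^ 2 = ‖f ω‖ ^ 2 + 2 * ⟪f ω, c⟫ + ‖c‖ ^ 2 :=
      norm_add_sq_real (f ω) c
    have h4 : ⟪c, -f ω⟫ = -⟪f ω, c⟫ := by
      rw [inner_neg_right, real_inner_comm]
    linarith
  have hinner_int : Integrable (fun ω => 2 * ⟪c, -f ω⟫) μ :=
    (hfint.neg.const_inner c).const_mul 2
  have hsq_meas : AEStronglyMeasurable (fun ω => ‖f ω‖ ^ 2) μ :=
    (hfint.aestronglyMeasurable.norm.pow 2 : _)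
  have hsq_int : Integrable (fun ω => ‖f ω‖ ^ 2) μ := by
    refine Integrable.mono' ((hfint.norm.const_mul (2 * ‖c‖))) hsq_meas ?_
    filter_upwards [hae] with ω h
    rw [Real.norm_eq_abs, abs_of_nonneg (sq_nonneg _)]
    calc ‖f ω‖ ^ 2 ≤ 2 * ⟪c, -f ω⟫ := h
      _ ≤ 2 * (‖c‖ * ‖-f ω‖) := by
          have := real_inner_le_norm c (-f ω)
          linarith
      _ = 2 * ‖c‖ * ‖f ω‖ := by rw [norm_neg]; ring
  have hint_le : ∫ ω, ‖f ω‖ ^ 2 ∂μ ≤ 0 := by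
    calc ∫ ω, ‖f ω‖ ^ 2 ∂μ ≤ ∫ ω, 2 * ⟪c, -f ω⟫ ∂μ :=
          integral_mono_ae hsq_int hinner_int hae
      _ = 2 * ⟪c, -∫ ω, f ω ∂μ⟫ := by
          rw [integral_const_mul]
          congr 1
          rw [← integral_neg]
          exact integral_inner hfint.neg c
      _ = 0 := by rw [hEf, neg_zero, inner_zero_right, mul_zero]
  have hzero : ∀ᵐ ω ∂μ, f ω = 0 := by
    have h0 : ∫ ω, ‖f ω‖ ^ 2 ∂μ = 0 :=
      le_antisymm hint_le (integral_nonneg fun ω => sq_nonneg _)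
    have := (integral_eq_zero_iff_of_nonneg (fun ω => sq_nonneg (‖f ω‖)) hsq_int).mp h0
    filter_upwards [this] with ω h
    have : ‖f ω‖ = 0 := by
      have h' : ‖f ω‖ ^ 2 = 0 := h
      nlinarith [norm_nonneg (f ω)]
    exact norm_eq_zero.mp this
  have hcongr : ∫⁻ ω, ‖Tξ ω p' - T p'‖₊ ^ 2 ∂μ = ∫⁻ ω, ‖Tξ ω p - T p‖₊ ^ 2 ∂μ := by
    refine lintegral_congr_ae ?_
    filter_upwards [hzero] with ω h
    have heq : Tξ ω p' - T p' = Tξ ω p - T p := by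
      have : Tξ ω p' - Tξ ω p - (p' - p) = 0 := h
      rw [hp, hp']
      have := sub_eq_zero.mp this
      -- Tξ ω p' - Tξ ω p = p' - p
      have h2 : Tξ ω p' - Tξ ω p = p' - p := this
      abel_nf
      abel_nf at h2
      linear_combination (norm := abel_nf) h2
    rw [heq]
  rw [hcongr]
  exact hvar
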